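/- For a prime p of the form p = 3r+1, Σ_{k=1}^{p-1} ⌊−3k/p⌋² = 14r. -/

import Mathlib

open Finset

theorem stmt_10 (p r : ℕ) (hp : p.Prime) (hr : 0 < r) (hpr : p = 3 * r + 1) :
    ∑ k ∈ Finset.Icc 1 (p - 1), (⌊(-3 * (k : ℚ)) / p⌋) ^ 2 = 14 * (r : ℤ) := by
  subst hpr
  have hrq : (1:ℚ) ≤ r := by exact_mod_cast hr
  have hpq : (0:ℚ) < ((3*r+1 : ℕ) : ℚ) := by positivity
  have hIcc : Finset.Icc 1 (3*r+1-1) = Finset.Ioc 0 (3*r) := by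
    rw [show 3*r+1-1 = 3*r from rfl, ← Finset.Icc_add_one_left_eq_Ioc, zero_add]
  rw [hIcc,
    ← Finset.sum_Ioc_consecutive _ (show 0 ≤ 2*r by omega) (show 2*r ≤ 3*r by omega),
    ← Finset.sum_Ioc_consecutive _ (show 0 ≤ r by omega) (show r ≤ 2*r by omega)]
  have e1 : ∀ k ∈ Finset.Ioc 0 r, (⌊(-3 * (k:ℚ)) / ((3*r+1 : ℕ):ℚ)⌋)^2 = 1 := by
    intro k hk
    simp only [Finset.mem_Ioc] at hk
    have hk1 : (1:ℚ) ≤ k := by exact_mod_cast hk.1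
    have hk2 : (k:ℚ) ≤ r := by exact_mod_cast hk.2
    have : ⌊(-3 * (k:ℚ)) / ((3*r+1 : ℕ):ℚ)⌋ = -1 := by
      rw [Int.floor_eq_iff]
      push_cast
      constructor
      · rw [le_div_iff₀ (by positivity)]
        nlinarith
      · rw [div_lt_iff₀ (by positivity)]
        nlinarith
    rw [this]; norm_num
  have e2 : ∀ k ∈ Finset.Ioc r (2*r), (⌊(-3 * (k:ℚ)) / ((3*r+1 : ℕ):ℚ)⌋)^2 = 4 := by
    intro k hk
    simp only [Finset.mem_Ioc] at hk
    have hk1 : (r:ℚ) + 1 ≤ k := by exact_mod_cast hk.1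
    have hk2 : (k:ℚ) ≤ 2*r := by exact_mod_cast hk.2
    have : ⌊(-3 * (k:ℚ)) / ((3*r+1 : ℕ):ℚ)⌋ = -2 := by
      rw [Int.floor_eq_iff]
      push_cast
      constructor
      · rw [le_div_iff₀ (by positivity)]
        nlinarith
      · rw [div_lt_iff₀ (by positivity)]
        nlinarith
    rw [this]; norm_num
  have e3 : ∀ k ∈ Finset.Ioc (2*r) (3*r), (⌊(-3 * (k:ℚ)) / ((3*r+1 : ℕ):ℚ)⌋)^2 = 9 := by
    intro k hk
    simp only [Finset.mem_Ioc] at hk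
    have hk1 : 2*(r:ℚ) + 1 ≤ k := by exact_mod_cast hk.1
    have hk2 : (k:ℚ) ≤ 3*r := by exact_mod_cast hk.2
    have : ⌊(-3 * (k:ℚ)) / ((3*r+1 : ℕ):ℚ)⌋ = -3 := by
      rw [Int.floor_eq_iff]
      push_cast
      constructor
      · rw [le_div_iff₀ (by positivity)]
        nlinarith
      · rw [div_lt_iff₀ (by positivity)]
        nlinarith
    rw [this]; norm_num
  rw [Finset.sum_congr rfl e1, Finset.sum_congr rfl e2, Finset.sum_congr rfl e3,
    Finset.sum_const, Finset.sum_const, Finset.sum_const]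
  simp [Nat.card_Ioc]
  omega
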